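/- For every integer k with k ≠ 0, every ξ ∈ ℝ, and every t ≥ 0, one has ∫₀ᵗ 2|k|·|ξ − k·s| / (k² + (ξ − k·s)²)² ds ≤ π/k². Consequently M₁(t,k,ξ) = exp(−∫₀ᵗ |k|/(k² + (ξ−ks)²) ds) satisfies |∂_ξ M₁(t,k,ξ)| ≤ (π/k²)·M₁(t,k,ξ). -/

import Mathlib

open Real

lemma aux_hasDerivAt (k x : ℝ) (hk : k ≠ 0) (s : ℝ) :
    HasDerivAt (fun s : ℝ => -(1/(k*|k|)) * Real.arctan ((x - k*s)/|k|))
      (1/(k^2 + (x - k*s)^2)) s := by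
  have ha : |k| ≠ 0 := abs_ne_zero.mpr hk
  have ha' : (0:ℝ) < |k| := abs_pos.mpr hk
  have h1 : HasDerivAt (fun s : ℝ => (x - k*s)/|k|) (-k/|k|) s := by
    have := ((hasDerivAt_const s x).sub ((hasDerivAt_id s).const_mul k)).div_const |k|
    simpa using this
  have h2 := (Real.hasDerivAt_arctan ((x - k*s)/|k|)).comp s h1
  have h3 := h2.const_mul (-(1/(k*|k|)))
  convert h3 using 1
  rotate_left 3
  have hk2 : |k|^2 = k^2 := sq_abs k
  have hkpos : (0:ℝ) < k^2 := by positivity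
  have hpos : (0:ℝ) < k^2 + (x - k*s)^2 := by positivity
  field_simp
  linear_combination hk2
  all_goals rfl

lemma int_formula (k x t : ℝ) (hk : k ≠ 0) :
    ∫ s in (0:ℝ)..t, 1/(k^2+(x - k*s)^2)
      = (1/(k*|k|)) * (Real.arctan (x/|k|) - Real.arctan ((x - k*t)/|k|)) := by
  have hc : Continuous (fun s : ℝ => 1/(k^2+(x - k*s)^2)) := by
    apply Continuous.div continuous_const (by continuity)
    intro s
    have : (0:ℝ) < k^2 := by positivity
    positivity
  rw [intervalIntegral.integral_eq_sub_of_hasDerivAt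
      (fun s _ => aux_hasDerivAt k x hk s) (hc.intervalIntegrable 0 t)]
  ring_nf


/-- Bound on the `ξ`-derivative of the inviscid damping multiplier `M₁`:
`∫₀ᵗ 2|k||ξ − k s|/(k² + (ξ − k s)²)² ds ≤ π/k²`, hence
`|∂_ξ M₁(t,k,ξ)| ≤ (π/k²) M₁(t,k,ξ)`. -/
theorem stmt_10 (k : ℤ) (hk : k ≠ 0) (ξ t : ℝ) (ht : 0 ≤ t) :
    (∫ s in (0:ℝ)..t,
        2 * |(k : ℝ)| * |ξ - (k : ℝ) * s| / ((k : ℝ) ^ 2 + (ξ - (k : ℝ) * s) ^ 2) ^ 2)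
      ≤ Real.pi / (k : ℝ) ^ 2 ∧
    |deriv (fun x : ℝ =>
        Real.exp (-∫ s in (0:ℝ)..t, |(k : ℝ)| / ((k : ℝ) ^ 2 + (x - (k : ℝ) * s) ^ 2))) ξ|
      ≤ Real.pi / (k : ℝ) ^ 2 *
          Real.exp (-∫ s in (0:ℝ)..t, |(k : ℝ)| / ((k : ℝ) ^ 2 + (ξ - (k : ℝ) * s) ^ 2)) := by
  have hK : (k:ℝ) ≠ 0 := Int.cast_ne_zero.mpr hk
  have hKpos : (0:ℝ) < (k:ℝ)^2 := by positivity
  have habs : (0:ℝ) < |(k:ℝ)| := abs_pos.mpr hK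
  have hden : ∀ x s : ℝ, (0:ℝ) < (k:ℝ)^2 + (x - (k:ℝ)*s)^2 := fun x s => by positivity
  have hc : |(1:ℝ)/((k:ℝ)*|(k:ℝ)|)| = 1/(k:ℝ)^2 := by
    rw [abs_div, abs_one, abs_mul, abs_abs, ← sq_abs, sq]
  constructor
  · -- Part 1
    have hmono : (∫ s in (0:ℝ)..t,
          2 * |(k : ℝ)| * |ξ - (k : ℝ) * s| / ((k : ℝ) ^ 2 + (ξ - (k : ℝ) * s) ^ 2) ^ 2)
        ≤ ∫ s in (0:ℝ)..t, 1/((k:ℝ)^2 + (ξ - (k:ℝ)*s)^2) := by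
      apply intervalIntegral.integral_mono_on ht
      · apply Continuous.intervalIntegrable
        apply Continuous.div (by continuity) (by continuity)
        intro s
        have := hden ξ s
        positivity
      · apply Continuous.intervalIntegrable
        apply Continuous.div continuous_const (by continuity)
        intro s
        have := hden ξ s
        positivity
      · intro s _
        have hD := hden ξ s
        have key : 2 * |(k:ℝ)| * |ξ - (k:ℝ)*s| ≤ (k:ℝ)^2 + (ξ - (k:ℝ)*s)^2 := by
          nlinarith [sq_nonneg (|(k:ℝ)| - |ξ - (k:ℝ)*s|), sq_abs (k:ℝ), sq_abs (ξ - (k:ℝ)*s)]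
        calc 2 * |(k:ℝ)| * |ξ - (k:ℝ)*s| / ((k:ℝ)^2 + (ξ - (k:ℝ)*s)^2)^2
            ≤ ((k:ℝ)^2 + (ξ - (k:ℝ)*s)^2) / ((k:ℝ)^2 + (ξ - (k:ℝ)*s)^2)^2 := by gcongr
          _ = 1/((k:ℝ)^2 + (ξ - (k:ℝ)*s)^2) := by
              rw [pow_two ((k:ℝ)^2 + (ξ - (k:ℝ)*s)^2), div_mul_eq_div_div, div_self (hden ξ s).ne']
    refine hmono.trans ?_
    rw [int_formula (k:ℝ) ξ t hK]
    set A := Real.arctan (ξ/|(k:ℝ)|)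
    set B := Real.arctan ((ξ - (k:ℝ)*t)/|(k:ℝ)|)
    have hA1 : A < Real.pi/2 := Real.arctan_lt_pi_div_two _
    have hA2 : -(Real.pi/2) < A := Real.neg_pi_div_two_lt_arctan _
    have hB1 : B < Real.pi/2 := Real.arctan_lt_pi_div_two _
    have hB2 : -(Real.pi/2) < B := Real.neg_pi_div_two_lt_arctan _
    have hAB : |A - B| ≤ Real.pi := abs_sub_le_iff.mpr ⟨by linarith, by linarith⟩
    calc 1/((k:ℝ)*|(k:ℝ)|) * (A - B) ≤ |1/((k:ℝ)*|(k:ℝ)|) * (A - B)| := le_abs_self _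
      _ = |1/((k:ℝ)*|(k:ℝ)|)| * |A - B| := abs_mul _ _
      _ ≤ (1/(k:ℝ)^2) * Real.pi := by rw [hc]; gcongr
      _ = Real.pi / (k:ℝ)^2 := by ring
  · -- Part 2
    have hg : ∀ x : ℝ, (∫ s in (0:ℝ)..t, |(k:ℝ)| / ((k:ℝ)^2 + (x - (k:ℝ)*s)^2))
        = (1/(k:ℝ)) * (Real.arctan (x/|(k:ℝ)|) - Real.arctan ((x - (k:ℝ)*t)/|(k:ℝ)|)) := by
      intro x
      have : (∫ s in (0:ℝ)..t, |(k:ℝ)| / ((k:ℝ)^2 + (x - (k:ℝ)*s)^2))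
          = |(k:ℝ)| * ∫ s in (0:ℝ)..t, 1/((k:ℝ)^2 + (x - (k:ℝ)*s)^2) := by
        rw [← intervalIntegral.integral_const_mul]
        congr 1
        funext s
        ring
      rw [this, int_formula (k:ℝ) x t hK]
      field_simp
    have hfun : (fun x : ℝ =>
        Real.exp (-∫ s in (0:ℝ)..t, |(k : ℝ)| / ((k : ℝ) ^ 2 + (x - (k : ℝ) * s) ^ 2)))
        = fun x : ℝ => Real.exp (-((1/(k:ℝ)) *
            (Real.arctan (x/|(k:ℝ)|) - Real.arctan ((x - (k:ℝ)*t)/|(k:ℝ)|)))) := by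
      funext x; rw [hg x]
    rw [hfun, hg ξ]
    have h1 : HasDerivAt (fun x : ℝ => x/|(k:ℝ)|) (1/|(k:ℝ)|) ξ := by
      simpa using (hasDerivAt_id ξ).div_const |(k:ℝ)|
    have h2 : HasDerivAt (fun x : ℝ => (x - (k:ℝ)*t)/|(k:ℝ)|) (1/|(k:ℝ)|) ξ := by
      simpa using ((hasDerivAt_id ξ).sub_const ((k:ℝ)*t)).div_const |(k:ℝ)|
    have hA : HasDerivAt (fun x : ℝ => Real.arctan (x/|(k:ℝ)|))
        ((1/(1+(ξ/|(k:ℝ)|)^2)) * (1/|(k:ℝ)|)) ξ :=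
      (Real.hasDerivAt_arctan _).comp ξ h1
    have hB : HasDerivAt (fun x : ℝ => Real.arctan ((x - (k:ℝ)*t)/|(k:ℝ)|))
        ((1/(1+((ξ - (k:ℝ)*t)/|(k:ℝ)|)^2)) * (1/|(k:ℝ)|)) ξ :=
      (Real.hasDerivAt_arctan _).comp ξ h2
    have hD := (((hA.sub hB).const_mul (1/(k:ℝ))).neg).exp
    have hD' : HasDerivAt (fun x : ℝ => Real.exp (-(1/(k:ℝ) * (Real.arctan (x/|(k:ℝ)|)
        - Real.arctan ((x - (k:ℝ)*t)/|(k:ℝ)|))))) (Real.exp (-(1/(k:ℝ) * (Real.arctan (ξ/|(k:ℝ)|)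
        - Real.arctan ((ξ - (k:ℝ)*t)/|(k:ℝ)|)))) * -(1/(k:ℝ) * ((1/(1+(ξ/|(k:ℝ)|)^2)) * (1/|(k:ℝ)|)
        - (1/(1+((ξ - (k:ℝ)*t)/|(k:ℝ)|)^2)) * (1/|(k:ℝ)|)))) ξ := hD
    rw [hD'.deriv]
    set u := (1:ℝ)/(1+(ξ/|(k:ℝ)|)^2) with hu
    set v := (1:ℝ)/(1+((ξ - (k:ℝ)*t)/|(k:ℝ)|)^2) with hv
    set E := Real.exp (-(1/(k:ℝ) * (Real.arctan (ξ/|(k:ℝ)|)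
        - Real.arctan ((ξ - (k:ℝ)*t)/|(k:ℝ)|)))) with hE
    have hEpos : 0 < E := Real.exp_pos _
    have hu1 : u ≤ 1 := by
      rw [hu, div_le_one (by positivity)]; nlinarith [sq_nonneg (ξ/|(k:ℝ)|)]
    have hv1 : v ≤ 1 := by
      rw [hv, div_le_one (by positivity)]; nlinarith [sq_nonneg ((ξ - (k:ℝ)*t)/|(k:ℝ)|)]
    have hu0 : 0 < u := by rw [hu]; positivity
    have hv0 : 0 < v := by rw [hv]; positivity
    have huv : |u - v| ≤ 1 := abs_sub_le_iff.mpr ⟨by linarith, by linarith⟩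
    have heq : E * -(1/(k:ℝ) * (u * (1/|(k:ℝ)|) - v * (1/|(k:ℝ)|)))
        = ((u - v) * -(1/((k:ℝ)*|(k:ℝ)|))) * E := by ring
    rw [heq, abs_mul, abs_of_pos hEpos, abs_mul, abs_neg, hc]
    have hpi : (1:ℝ) ≤ Real.pi := by linarith [Real.pi_gt_three]
    gcongr ?_ * E
    calc |u - v| * (1/(k:ℝ)^2) ≤ 1 * (1/(k:ℝ)^2) := by gcongr
      _ = 1/(k:ℝ)^2 := one_mul _
      _ ≤ Real.pi/(k:ℝ)^2 := by gcongr
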